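/- Let n ≥ 4, set m = n(n−1)/2, and work in the polynomial ring ℤ[a_1, …, a_m][X_1, …, X_n][t] with f(s) = 1 + Σ_{i=1}^{m} a_i s^i and f̃(s) = Σ_{1 ≤ 2l−1 ≤ m} a_{2l−1} s^{2l−1} (the odd-degree part of f − 1). Then the coefficient of t^m in Σ_{σ ∈ S_n} sgn(σ) Π_{1≤i<j≤n} f(t(X_{σ(i)} − X_{σ(j)})) equals the coefficient of t^m in Σ_{σ ∈ S_n} sgn(σ) · f̃(t(X_{σ(1)} − X_{σ(2)})) · f̃(t(X_{σ(n−1)} − X_{σ(n)})) · Π_{1≤i<j≤n, (i,j)≠(1,2),(n−1,n)} f(t(X_{σ(i)} − X_{σ(j)})). (Hence for n ≥ 4 the cobordism class of the flag manifold U(n)/Tⁿ is given as the coefficient of t^{n(n−1)/2} in L(f̃(t(x_1−x_2)) f̃(t(x_{n−1}−x_n)) Π_{(i,j)≠(1,2),(n−1,n)} f(t(x_i−x_j))).) -/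

import Mathlib

/-- The set of pairs `i < j` in `Fin n × Fin n`. -/
def flagPairs (n : ℕ) : Finset (Fin n × Fin n) :=
  Finset.univ.filter (fun p => p.1 < p.2)

/-- `f(t·d) = 1 + Σᵢ aᵢ dⁱ tⁱ` as an element of `ℤ[a₁,…,a_m][X₁,…,Xₙ][t]`. -/
noncomputable def fFactor (n m : ℕ) (d : MvPolynomial (Fin n) ℤ) :
    Polynomial (MvPolynomial (Fin m) (MvPolynomial (Fin n) ℤ)) :=
  1 + ∑ i : Fin m,
    Polynomial.C (MvPolynomial.X i * MvPolynomial.C (d ^ (i.1 + 1))) * Polynomial.X ^ (i.1 + 1)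

/-- `f̃(t·d) = Σ_{2l−1 ≤ m} a_{2l−1} d^{2l−1} t^{2l−1}`, the odd part of `f − 1`. -/
noncomputable def fFactorOdd (n m : ℕ) (d : MvPolynomial (Fin n) ℤ) :
    Polynomial (MvPolynomial (Fin m) (MvPolynomial (Fin n) ℤ)) :=
  ∑ i ∈ Finset.univ.filter (fun i : Fin m => (i.1 + 1) % 2 = 1),
    Polynomial.C (MvPolynomial.X i * MvPolynomial.C (d ^ (i.1 + 1))) * Polynomial.X ^ (i.1 + 1)

/-- For `n ≥ 4` and `m = n(n−1)/2`, the coefficient of `t^m` in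
`Σ_σ sgn(σ) Π_{i<j} f(t(X_{σ(i)}−X_{σ(j)}))` equals the coefficient of `t^m` in
`Σ_σ sgn(σ) f̃(t(X_{σ(1)}−X_{σ(2)})) f̃(t(X_{σ(n−1)}−X_{σ(n)}))
Π_{(i,j)≠(1,2),(n−1,n)} f(t(X_{σ(i)}−X_{σ(j)}))`. -/
lemma neg_coeff_aux {n m : ℕ} (d : MvPolynomial (Fin n) ℤ) (i : Fin m) (hp : (i.1 + 1) % 2 = 1) :
    MvPolynomial.X i * MvPolynomial.C ((-d) ^ (i.1 + 1)) =
      -(MvPolynomial.X i * MvPolynomial.C (d ^ (i.1 + 1))) := by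
  rw [(Nat.odd_iff.mpr hp).neg_pow, MvPolynomial.C_neg]
  ring

lemma fFactor_neg (n m : ℕ) (d : MvPolynomial (Fin n) ℤ) :
    fFactor n m (-d) = fFactor n m d - 2 * fFactorOdd n m d := by
  unfold fFactor fFactorOdd
  rw [Finset.mul_sum, Finset.sum_filter]
  have h : (∑ i : Fin m,
      Polynomial.C (MvPolynomial.X i * MvPolynomial.C (d ^ (i.1 + 1))) * Polynomial.X ^ (i.1 + 1))
      = (∑ i : Fin m,
      Polynomial.C (MvPolynomial.X i * MvPolynomial.C ((-d) ^ (i.1 + 1))) * Polynomial.X ^ (i.1 + 1))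
      + ∑ i : Fin m, (if (i.1 + 1) % 2 = 1 then
          2 * (Polynomial.C (MvPolynomial.X i * MvPolynomial.C (d ^ (i.1 + 1))) * Polynomial.X ^ (i.1 + 1))
        else 0) := by
    rw [← Finset.sum_add_distrib]
    apply Finset.sum_congr rfl
    intro i _
    by_cases hp : (i.1 + 1) % 2 = 1
    · rw [if_pos hp, neg_coeff_aux d i hp, Polynomial.C_neg]
      ring
    · rw [if_neg hp, (Nat.even_iff.mpr (by omega)).neg_pow, add_zero]
  rw [h]
  ring

lemma swap_adj_lt {n : ℕ} (k : ℕ) (hk1 : k < n) (hk2 : k + 1 < n)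
    (x y : Fin n) (hxy : x < y) (hne : ¬(x = ⟨k, hk1⟩ ∧ y = ⟨k + 1, hk2⟩)) :
    Equiv.swap ⟨k, hk1⟩ ⟨k + 1, hk2⟩ x < Equiv.swap ⟨k, hk1⟩ ⟨k + 1, hk2⟩ y := by
  simp only [Equiv.swap_apply_def]
  split_ifs <;>
    (try simp only [Fin.ext_iff, Fin.lt_def, Fin.val_mk] at *) <;> omega

lemma sum_eq_of_comp {ι R : Type*} [Fintype ι] [CommRing R] [IsDomain R] (h2 : (2:R) ≠ 0)
    (e : ι ≃ ι) (u v : ι → R) (h : ∀ σ, u (e σ) = 2 * v σ - u σ) :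
    ∑ σ, u σ = ∑ σ, v σ := by
  have h1 : ∑ σ, u σ = ∑ σ, u (e σ) := (Equiv.sum_comp e u).symm
  have h2' : ∑ σ, u (e σ) = 2 * (∑ σ, v σ) - ∑ σ, u σ := by
    rw [Finset.sum_congr rfl (fun σ _ => h σ), Finset.sum_sub_distrib, Finset.mul_sum]
  have h3 : (2:R) * ∑ σ, u σ = 2 * ∑ σ, v σ := by linear_combination h1.trans h2'
  exact mul_left_cancel₀ h2 h3

lemma swap_step (n m : ℕ) (a b : Fin n) (hab : a ≠ b)
    (T : Finset (Fin n × Fin n))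
    (hT : ∀ p ∈ T, ((Equiv.swap a b p.1, Equiv.swap a b p.2) : Fin n × Fin n) ∈ T)
    (G : Equiv.Perm (Fin n) → Polynomial (MvPolynomial (Fin m) (MvPolynomial (Fin n) ℤ)))
    (hG : ∀ σ : Equiv.Perm (Fin n), G (σ * Equiv.swap a b) = G σ) :
    (∑ σ : Equiv.Perm (Fin n), (Equiv.Perm.sign σ : ℤ) •
      (G σ * fFactor n m (MvPolynomial.X (σ a) - MvPolynomial.X (σ b)) *
        ∏ p ∈ T, fFactor n m (MvPolynomial.X (σ p.1) - MvPolynomial.X (σ p.2)))) =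
    ∑ σ : Equiv.Perm (Fin n), (Equiv.Perm.sign σ : ℤ) •
      (G σ * fFactorOdd n m (MvPolynomial.X (σ a) - MvPolynomial.X (σ b)) *
        ∏ p ∈ T, fFactor n m (MvPolynomial.X (σ p.1) - MvPolynomial.X (σ p.2))) := by
  refine sum_eq_of_comp (R := Polynomial (MvPolynomial (Fin m) (MvPolynomial (Fin n) ℤ))) two_ne_zero (Equiv.mulRight (Equiv.swap a b)) _ _ ?_
  intro σ
  simp only [Equiv.coe_mulRight]
  have hsg : ((Equiv.Perm.sign (σ * Equiv.swap a b) : ℤ)) = -(Equiv.Perm.sign σ : ℤ) := by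
    simp [Equiv.Perm.sign_mul, Equiv.Perm.sign_swap hab]
  have hca : (σ * Equiv.swap a b) a = σ b := by simp
  have hcb : (σ * Equiv.swap a b) b = σ a := by simp
  have hPP : (∏ p ∈ T, fFactor n m
        (MvPolynomial.X ((σ * Equiv.swap a b) p.1) - MvPolynomial.X ((σ * Equiv.swap a b) p.2))) =
      ∏ p ∈ T, fFactor n m (MvPolynomial.X (σ p.1) - MvPolynomial.X (σ p.2)) := by
    refine Finset.prod_nbij' (fun p => (Equiv.swap a b p.1, Equiv.swap a b p.2))
      (fun p => (Equiv.swap a b p.1, Equiv.swap a b p.2))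
      (fun p hp => hT p hp) (fun p hp => hT p hp) ?_ ?_ ?_
    · intro p hp
      simp [Equiv.swap_apply_self]
    · intro p hp
      simp [Equiv.swap_apply_self]
    · intro p hp
      simp [Equiv.Perm.mul_apply]
  have hfn := fFactor_neg n m (MvPolynomial.X (σ a) - MvPolynomial.X (σ b))
  rw [neg_sub] at hfn
  rw [hca, hcb, hG σ, hPP, hfn]
  have hsm : ∀ (z : ℤ) (x : Polynomial (MvPolynomial (Fin m) (MvPolynomial (Fin n) ℤ))),
      z • x = (z : Polynomial (MvPolynomial (Fin m) (MvPolynomial (Fin n) ℤ))) * x :=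
    fun z x => zsmul_eq_mul x z
  have hsg2 : (((Equiv.Perm.sign (σ * Equiv.swap a b) : ℤ)) :
      Polynomial (MvPolynomial (Fin m) (MvPolynomial (Fin n) ℤ)))
      = -(((Equiv.Perm.sign σ : ℤ)) :
      Polynomial (MvPolynomial (Fin m) (MvPolynomial (Fin n) ℤ))) := by
    rw [hsg]
    exact Int.cast_neg (R := Polynomial (MvPolynomial (Fin m) (MvPolynomial (Fin n) ℤ))) _
  simp only [hsm]
  rw [hsg2]
  ring

lemma mem_flagPairs {n : ℕ} (p : Fin n × Fin n) : p ∈ flagPairs n ↔ p.1 < p.2 := by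
  simp [flagPairs]

lemma swap_pair_eq {n : ℕ} (a b x y : Fin n)
    (h : ((Equiv.swap a b x, Equiv.swap a b y) : Fin n × Fin n) = (a, b)) : x = b ∧ y = a := by
  rw [Prod.mk.injEq] at h
  constructor
  · have := congrArg (Equiv.swap a b) h.1
    rwa [Equiv.swap_apply_self, Equiv.swap_apply_left] at this
  · have := congrArg (Equiv.swap a b) h.2
    rwa [Equiv.swap_apply_self, Equiv.swap_apply_right] at this

lemma swap_pair_eq_other {n : ℕ} (a b x y c d : Fin n) (hc : c ≠ a) (hc' : c ≠ b)
    (hd : d ≠ a) (hd' : d ≠ b)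
    (h : ((Equiv.swap a b x, Equiv.swap a b y) : Fin n × Fin n) = (c, d)) : x = c ∧ y = d := by
  rw [Prod.mk.injEq] at h
  constructor
  · have := congrArg (Equiv.swap a b) h.1
    rwa [Equiv.swap_apply_self, Equiv.swap_apply_of_ne_of_ne hc hc'] at this
  · have := congrArg (Equiv.swap a b) h.2
    rwa [Equiv.swap_apply_self, Equiv.swap_apply_of_ne_of_ne hd hd'] at this

lemma hT1 (n : ℕ) (hn : 3 < n) :
    ∀ p ∈ (flagPairs n).erase ((⟨0, by omega⟩ : Fin n), (⟨1, by omega⟩ : Fin n)),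
      ((Equiv.swap (⟨0, by omega⟩ : Fin n) ⟨1, by omega⟩ p.1,
        Equiv.swap (⟨0, by omega⟩ : Fin n) ⟨1, by omega⟩ p.2) : Fin n × Fin n) ∈
      (flagPairs n).erase ((⟨0, by omega⟩ : Fin n), (⟨1, by omega⟩ : Fin n)) := by
  intro p hp
  rw [Finset.mem_erase, mem_flagPairs] at hp ⊢
  obtain ⟨hne, hlt⟩ := hp
  constructor
  · intro h
    obtain ⟨e1, e2⟩ := swap_pair_eq _ _ _ _ h
    rw [e1, e2] at hlt
    simp [Fin.lt_def] at hlt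
  · exact swap_adj_lt 0 (by omega) (by omega) p.1 p.2 hlt
      (fun h => hne (Prod.ext_iff.mpr ⟨h.1, h.2⟩))

lemma hT2 (n : ℕ) (hn : 3 < n) :
    ∀ p ∈ (((flagPairs n).erase ((⟨0, by omega⟩ : Fin n), (⟨1, by omega⟩ : Fin n))).erase
        ((⟨n - 2, by omega⟩ : Fin n), (⟨n - 1, by omega⟩ : Fin n))),
      ((Equiv.swap (⟨n - 2, by omega⟩ : Fin n) ⟨n - 1, by omega⟩ p.1,
        Equiv.swap (⟨n - 2, by omega⟩ : Fin n) ⟨n - 1, by omega⟩ p.2) : Fin n × Fin n) ∈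
      (((flagPairs n).erase ((⟨0, by omega⟩ : Fin n), (⟨1, by omega⟩ : Fin n))).erase
        ((⟨n - 2, by omega⟩ : Fin n), (⟨n - 1, by omega⟩ : Fin n))) := by
  intro p hp
  rw [Finset.mem_erase, Finset.mem_erase, mem_flagPairs] at hp ⊢
  obtain ⟨hnew, hnez, hlt⟩ := hp
  refine ⟨?_, ?_, ?_⟩
  · intro h
    obtain ⟨e1, e2⟩ := swap_pair_eq _ _ _ _ h
    rw [e1, e2] at hlt
    simp only [Fin.lt_def, Fin.val_mk] at hlt
    omega
  · intro h
    obtain ⟨e1, e2⟩ := swap_pair_eq_other _ _ _ _ _ _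
      (by simp [Fin.ext_iff]; omega) (by simp [Fin.ext_iff]; omega)
      (by simp [Fin.ext_iff]; omega) (by simp [Fin.ext_iff]; omega) h
    exact hnez (Prod.ext_iff.mpr ⟨e1, e2⟩)
  · have hw1 : (⟨n - 1, by omega⟩ : Fin n) = ⟨n - 2 + 1, by omega⟩ := by
      simp [Fin.ext_iff]; omega
    rw [hw1]
    exact swap_adj_lt (n - 2) (by omega) (by omega) p.1 p.2 hlt
      (by
        intro h
        refine hnew (Prod.ext_iff.mpr ⟨h.1, ?_⟩)
        rw [h.2, ← hw1])


set_option maxHeartbeats 10000000 in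
theorem flag_cobordism_odd_reduction (n : ℕ) (hn : 4 ≤ n) :
    (∑ σ : Equiv.Perm (Fin n),
        (Equiv.Perm.sign σ : ℤ) •
          ∏ p ∈ flagPairs n,
            fFactor n (n * (n - 1) / 2)
              (MvPolynomial.X (σ p.1) - MvPolynomial.X (σ p.2))).coeff (n * (n - 1) / 2) =
    (∑ σ : Equiv.Perm (Fin n),
        (Equiv.Perm.sign σ : ℤ) •
          (fFactorOdd n (n * (n - 1) / 2)
              (MvPolynomial.X (σ ⟨0, by omega⟩) - MvPolynomial.X (σ ⟨1, by omega⟩)) *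
            fFactorOdd n (n * (n - 1) / 2)
              (MvPolynomial.X (σ ⟨n - 2, by omega⟩) - MvPolynomial.X (σ ⟨n - 1, by omega⟩)) *
            ∏ p ∈ ((flagPairs n).erase (⟨0, by omega⟩, ⟨1, by omega⟩)).erase
                (⟨n - 2, by omega⟩, ⟨n - 1, by omega⟩),
              fFactor n (n * (n - 1) / 2)
                (MvPolynomial.X (σ p.1) - MvPolynomial.X (σ p.2)))).coeff
      (n * (n - 1) / 2) := by
  have hzmem : (((⟨0, by omega⟩ : Fin n), (⟨1, by omega⟩ : Fin n)) : Fin n × Fin n) ∈ flagPairs n := by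
    rw [mem_flagPairs]
    simp [Fin.lt_def]
  have hwmem : (((⟨n - 2, by omega⟩ : Fin n), (⟨n - 1, by omega⟩ : Fin n)) : Fin n × Fin n) ∈
      (flagPairs n).erase ((⟨0, by omega⟩ : Fin n), (⟨1, by omega⟩ : Fin n)) := by
    rw [Finset.mem_erase, mem_flagPairs]
    constructor
    · simp [Prod.ext_iff, Fin.ext_iff]
      omega
    · simp [Fin.lt_def]
      omega
  have hz01 : ((⟨0, by omega⟩ : Fin n)) ≠ ⟨1, by omega⟩ := by
    simp [Fin.ext_iff]
  have hw01 : ((⟨n - 2, by omega⟩ : Fin n)) ≠ ⟨n - 1, by omega⟩ := by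
    simp [Fin.ext_iff]
    omega
  congr 1
  calc
    (∑ σ : Equiv.Perm (Fin n),
        (Equiv.Perm.sign σ : ℤ) •
          ∏ p ∈ flagPairs n,
            fFactor n (n * (n - 1) / 2)
              (MvPolynomial.X (σ p.1) - MvPolynomial.X (σ p.2)))
      = ∑ σ : Equiv.Perm (Fin n),
        (Equiv.Perm.sign σ : ℤ) •
          ((fun _ : Equiv.Perm (Fin n) => (1 : Polynomial (MvPolynomial (Fin (n * (n - 1) / 2)) (MvPolynomial (Fin n) ℤ)))) σ *
            fFactor n (n * (n - 1) / 2)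
              (MvPolynomial.X (σ ⟨0, by omega⟩) - MvPolynomial.X (σ ⟨1, by omega⟩)) *
            ∏ p ∈ (flagPairs n).erase ((⟨0, by omega⟩ : Fin n), (⟨1, by omega⟩ : Fin n)),
              fFactor n (n * (n - 1) / 2)
                (MvPolynomial.X (σ p.1) - MvPolynomial.X (σ p.2))) := by
        apply Finset.sum_congr rfl
        intro σ _
        congr 1
        rw [← Finset.mul_prod_erase (flagPairs n)
          (fun p => fFactor n (n * (n - 1) / 2)
            (MvPolynomial.X (σ p.1) - MvPolynomial.X (σ p.2))) hzmem, one_mul]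
    _ = ∑ σ : Equiv.Perm (Fin n),
        (Equiv.Perm.sign σ : ℤ) •
          ((fun _ : Equiv.Perm (Fin n) => (1 : Polynomial (MvPolynomial (Fin (n * (n - 1) / 2)) (MvPolynomial (Fin n) ℤ)))) σ *
            fFactorOdd n (n * (n - 1) / 2)
              (MvPolynomial.X (σ ⟨0, by omega⟩) - MvPolynomial.X (σ ⟨1, by omega⟩)) *
            ∏ p ∈ (flagPairs n).erase ((⟨0, by omega⟩ : Fin n), (⟨1, by omega⟩ : Fin n)),
              fFactor n (n * (n - 1) / 2)
                (MvPolynomial.X (σ p.1) - MvPolynomial.X (σ p.2))) :=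
        swap_step n (n * (n - 1) / 2) ⟨0, by omega⟩ ⟨1, by omega⟩ hz01 _ (hT1 n hn) _ (fun σ => rfl)
    _ = ∑ σ : Equiv.Perm (Fin n),
        (Equiv.Perm.sign σ : ℤ) •
          ((fun τ : Equiv.Perm (Fin n) => fFactorOdd n (n * (n - 1) / 2)
              (MvPolynomial.X (τ ⟨0, by omega⟩) - MvPolynomial.X (τ ⟨1, by omega⟩))) σ *
            fFactor n (n * (n - 1) / 2)
              (MvPolynomial.X (σ ⟨n - 2, by omega⟩) - MvPolynomial.X (σ ⟨n - 1, by omega⟩)) *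
            ∏ p ∈ ((flagPairs n).erase ((⟨0, by omega⟩ : Fin n), (⟨1, by omega⟩ : Fin n))).erase
                ((⟨n - 2, by omega⟩ : Fin n), (⟨n - 1, by omega⟩ : Fin n)),
              fFactor n (n * (n - 1) / 2)
                (MvPolynomial.X (σ p.1) - MvPolynomial.X (σ p.2))) := by
        apply Finset.sum_congr rfl
        intro σ _
        congr 1
        rw [← Finset.mul_prod_erase ((flagPairs n).erase ((⟨0, by omega⟩ : Fin n), (⟨1, by omega⟩ : Fin n)))
          (fun p => fFactor n (n * (n - 1) / 2)
            (MvPolynomial.X (σ p.1) - MvPolynomial.X (σ p.2))) hwmem, one_mul, ← mul_assoc]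
    _ = ∑ σ : Equiv.Perm (Fin n),
        (Equiv.Perm.sign σ : ℤ) •
          ((fun τ : Equiv.Perm (Fin n) => fFactorOdd n (n * (n - 1) / 2)
              (MvPolynomial.X (τ ⟨0, by omega⟩) - MvPolynomial.X (τ ⟨1, by omega⟩))) σ *
            fFactorOdd n (n * (n - 1) / 2)
              (MvPolynomial.X (σ ⟨n - 2, by omega⟩) - MvPolynomial.X (σ ⟨n - 1, by omega⟩)) *
            ∏ p ∈ ((flagPairs n).erase ((⟨0, by omega⟩ : Fin n), (⟨1, by omega⟩ : Fin n))).erase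
                ((⟨n - 2, by omega⟩ : Fin n), (⟨n - 1, by omega⟩ : Fin n)),
              fFactor n (n * (n - 1) / 2)
                (MvPolynomial.X (σ p.1) - MvPolynomial.X (σ p.2))) := by
        refine swap_step n (n * (n - 1) / 2) ⟨n - 2, by omega⟩ ⟨n - 1, by omega⟩ hw01 _ (hT2 n hn) _ ?_
        intro σ
        simp only [Equiv.Perm.mul_apply]
        rw [Equiv.swap_apply_of_ne_of_ne (by simp [Fin.ext_iff]; omega) (by simp [Fin.ext_iff]; omega),
          Equiv.swap_apply_of_ne_of_ne (by simp [Fin.ext_iff]; omega) (by simp [Fin.ext_iff]; omega)]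
    _ = ∑ σ : Equiv.Perm (Fin n),
        (Equiv.Perm.sign σ : ℤ) •
          (fFactorOdd n (n * (n - 1) / 2)
              (MvPolynomial.X (σ ⟨0, by omega⟩) - MvPolynomial.X (σ ⟨1, by omega⟩)) *
            fFactorOdd n (n * (n - 1) / 2)
              (MvPolynomial.X (σ ⟨n - 2, by omega⟩) - MvPolynomial.X (σ ⟨n - 1, by omega⟩)) *
            ∏ p ∈ ((flagPairs n).erase (⟨0, by omega⟩, ⟨1, by omega⟩)).erase
                (⟨n - 2, by omega⟩, ⟨n - 1, by omega⟩),
              fFactor n (n * (n - 1) / 2)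
                (MvPolynomial.X (σ p.1) - MvPolynomial.X (σ p.2))) := rfl
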